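/- Every finite simple 4-regular graph G on n vertices has a co-secure dominating set of cardinality at most 2n/3; in particular γ_cs(G) ≤ 2n/3. -/
import Mathlib


/-- `D` is a dominating set of `G`: every vertex outside `D` has a neighbor in `D`. -/
def IsDomSet {V : Type*} (G : SimpleGraph V) (D : Set V) : Prop :=
  ∀ v ∉ D, ∃ u ∈ D, G.Adj u v

/-- `S` is a co-secure dominating set of `G`. -/
def IsCSDS {V : Type*} (G : SimpleGraph V) (S : Set V) : Prop :=
  IsDomSet G S ∧ ∀ u ∈ S, ∃ v, v ∉ S ∧ G.Adj u v ∧ IsDomSet G (S \ {u} ∪ {v})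

/-- `D` is a double dominating set of `G`: every vertex outside `D` has at
least two neighbors in `D`. -/
def IsDoubleDomSet {V : Type*} (G : SimpleGraph V) (D : Set V) : Prop :=
  ∀ v ∉ D, 2 ≤ (G.neighborSet v ∩ D).ncard

/-- The co-secure domination number `γ_cs(G)`. -/
noncomputable def gammaCS {V : Type*} [Fintype V] (G : SimpleGraph V) : ℕ :=
  sInf {n : ℕ | ∃ S : Set V, IsCSDS G S ∧ S.ncard = n}

/-- The double domination number `γ₂(G)`. -/
noncomputable def gamma2 {V : Type*} [Fintype V] (G : SimpleGraph V) : ℕ :=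
  sInf {n : ℕ | ∃ D : Set V, IsDoubleDomSet G D ∧ D.ncard = n}



section aux
variable {V : Type*} [Fintype V] [DecidableEq V] (G : SimpleGraph V) [DecidableRel G.Adj]

def dIn (A : Finset V) (x : V) : ℕ := (G.neighborFinset x ∩ A).card

def wgt (A : Finset V) : ℕ :=
  (∑ x ∈ A, dIn G A x) + ∑ x ∈ Aᶜ, dIn G Aᶜ x

lemma dIn_insert (A : Finset V) (v x : V) (hv : v ∉ A) :
    dIn G (insert v A) x = dIn G A x + (if G.Adj x v then 1 else 0) := by
  unfold dIn
  by_cases h : G.Adj x v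
  · have hvN : v ∈ G.neighborFinset x := by simpa using h
    rw [Finset.inter_insert_of_mem hvN, Finset.card_insert_of_notMem (by simp [hv]), if_pos h]
  · have hvN : v ∉ G.neighborFinset x := by simpa using h
    rw [Finset.inter_insert_of_notMem hvN, if_neg h]
    simp

lemma dIn_erase (A : Finset V) (v : V) :
    dIn G (A.erase v) v = dIn G A v := by
  unfold dIn
  congr 1
  ext x
  simp only [Finset.mem_inter, Finset.mem_erase, SimpleGraph.mem_neighborFinset]
  constructor
  · rintro ⟨h1, _, h2⟩; exact ⟨h1, h2⟩
  · rintro ⟨h1, h2⟩; exact ⟨h1, fun hx => (G.ne_of_adj h1) (by rw [hx]), h2⟩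

lemma sum_adj (A : Finset V) (v : V) :
    (∑ x ∈ A, if G.Adj x v then 1 else 0) = dIn G A v := by
  rw [Finset.sum_boole]
  push_cast
  unfold dIn
  congr 1
  ext x
  simp [Finset.mem_filter, SimpleGraph.mem_neighborFinset, G.adj_comm, and_comm]

lemma sum_dIn_insert (A : Finset V) (v : V) (hv : v ∉ A) :
    (∑ x ∈ insert v A, dIn G (insert v A) x)
      = (∑ x ∈ A, dIn G A x) + 2 * dIn G A v := by
  rw [Finset.sum_insert hv]
  have h1 : dIn G (insert v A) v = dIn G A v := by
    rw [dIn_insert G A v v hv, if_neg (G.irrefl), add_zero]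
  have h2 : ∀ x ∈ A, dIn G (insert v A) x = dIn G A x + (if G.Adj x v then 1 else 0) :=
    fun x _ => dIn_insert G A v x hv
  rw [h1, Finset.sum_congr rfl h2, Finset.sum_add_distrib, sum_adj]
  ring

lemma wgt_insert (A : Finset V) (v : V) (hv : v ∉ A) :
    wgt G (insert v A) + 2 * dIn G (Aᶜ.erase v) v = wgt G A + 2 * dIn G A v := by
  have hvB : v ∈ Aᶜ := by simpa using hv
  have hcompl : (insert v A)ᶜ = Aᶜ.erase v := by
    ext x; simp [Finset.mem_erase, and_comm, not_or]
  have hins : insert v (Aᶜ.erase v) = Aᶜ := Finset.insert_erase hvB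
  have hv' : v ∉ Aᶜ.erase v := Finset.notMem_erase v _
  have key : (∑ x ∈ Aᶜ, dIn G Aᶜ x)
      = (∑ x ∈ Aᶜ.erase v, dIn G (Aᶜ.erase v) x) + 2 * dIn G (Aᶜ.erase v) v := by
    conv_lhs => rw [← hins]
    exact sum_dIn_insert G (Aᶜ.erase v) v hv'
  unfold wgt
  rw [hcompl, sum_dIn_insert G A v hv, key]
  ring

lemma dIn_add_compl (A : Finset V) (v : V) :
    dIn G A v + dIn G Aᶜ v = G.degree v := by
  unfold dIn
  rw [← Finset.card_union_of_disjoint (by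
    exact Finset.disjoint_left.2 (fun x hx hx2 => by
      simp only [Finset.mem_inter, Finset.mem_compl] at hx hx2
      exact hx2.2 hx.2))]
  rw [← Finset.inter_union_distrib_left, Finset.union_compl, Finset.inter_univ]
  rfl

/-- There is a partition of `V` into `(A, Aᶜ)` such that every vertex has at most
half its degree on its own side. -/
lemma exists_balanced :
    ∃ A : Finset V, (∀ v ∈ A, 2 * dIn G A v ≤ G.degree v) ∧
      (∀ v ∈ Aᶜ, 2 * dIn G Aᶜ v ≤ G.degree v) := by
  obtain ⟨A, -, hmin⟩ := Finset.exists_min_image (Finset.univ : Finset (Finset V)) (wgt G)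
    ⟨∅, Finset.mem_univ _⟩
  refine ⟨A, ?_, ?_⟩
  · intro v hv
    have hv' : v ∉ A.erase v := Finset.notMem_erase v A
    have heq := wgt_insert G (A.erase v) v hv'
    rw [Finset.insert_erase hv] at heq
    have hle := hmin (A.erase v) (Finset.mem_univ _)
    have h1 : dIn G ((A.erase v)ᶜ.erase v) v = dIn G Aᶜ v := by
      rw [dIn_erase]
      unfold dIn
      congr 1
      ext x
      simp only [Finset.mem_inter, Finset.mem_compl, Finset.mem_erase,
        SimpleGraph.mem_neighborFinset]
      constructor
      · rintro ⟨h1, h2⟩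
        exact ⟨h1, fun hx => h2 ⟨fun he => (G.ne_of_adj h1) (by rw [he]), hx⟩⟩
      · rintro ⟨h1, h2⟩
        exact ⟨h1, fun hx => h2 hx.2⟩
    rw [h1, dIn_erase] at heq
    have : dIn G A v ≤ dIn G Aᶜ v := by omega
    have hsum := dIn_add_compl G A v
    omega
  · intro v hv
    have hvA : v ∉ A := by simpa using hv
    have heq := wgt_insert G A v hvA
    have hle := hmin (insert v A) (Finset.mem_univ _)
    have h1 : dIn G (Aᶜ.erase v) v = dIn G Aᶜ v := dIn_erase G Aᶜ v
    rw [h1] at heq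
    have : dIn G Aᶜ v ≤ dIn G A v := by omega
    have hsum := dIn_add_compl G A v
    omega

end aux

theorem stmt13 {V : Type*} [Fintype V] (G : SimpleGraph V)
    (hreg : ∀ v : V, (G.neighborSet v).ncard = 4) :
    (∃ S : Set V, IsCSDS G S ∧ (S.ncard : ℝ) ≤ 2 * (Fintype.card V : ℝ) / 3) ∧
    (gammaCS G : ℝ) ≤ 2 * (Fintype.card V : ℝ) / 3 := by
  classical
  have hdeg : ∀ v : V, G.degree v = 4 := by
    intro v
    rw [← hreg v, SimpleGraph.degree, SimpleGraph.neighborFinset,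
      ← Set.ncard_eq_toFinset_card']
  obtain ⟨A, hA, hAc⟩ := exists_balanced G
  -- choose the smaller side
  obtain ⟨S, hScard, hS2, hT2⟩ : ∃ S : Finset V, 2 * S.card ≤ Fintype.card V ∧
      (∀ u ∈ S, dIn G S u ≤ 2) ∧ (∀ v ∈ Sᶜ, dIn G Sᶜ v ≤ 2) := by
    by_cases h : A.card ≤ Aᶜ.card
    · refine ⟨A, ?_, fun u hu => by have := hA u hu; rw [hdeg] at this; omega,
        fun v hv => by have := hAc v hv; rw [hdeg] at this; omega⟩
      have := Finset.card_add_card_compl A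
      omega
    · refine ⟨Aᶜ, ?_, fun u hu => by have := hAc u hu; rw [hdeg] at this; omega,
        fun v hv => ?_⟩
      · have := Finset.card_add_card_compl A
        omega
      · rw [compl_compl] at hv
        have := hA v hv
        rw [hdeg] at this
        rw [compl_compl]
        omega
  have hTout : ∀ v ∉ S, 2 ≤ dIn G S v := by
    intro v hv
    have h1 := hT2 v (Finset.mem_compl.2 hv)
    have h2 := dIn_add_compl G S v
    rw [hdeg] at h2
    omega
  have hSout : ∀ u ∈ S, 2 ≤ dIn G Sᶜ u := by
    intro u hu
    have h1 := hS2 u hu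
    have h2 := dIn_add_compl G S u
    rw [hdeg] at h2
    omega
  have hdom : IsDomSet G (↑S : Set V) := by
    intro v hv
    have h1 := hTout v (by simpa using hv)
    have hne : (G.neighborFinset v ∩ S).Nonempty := by
      rw [← Finset.card_pos]; unfold dIn at h1; omega
    obtain ⟨u, hu⟩ := hne
    rw [Finset.mem_inter, SimpleGraph.mem_neighborFinset] at hu
    exact ⟨u, by simpa using hu.2, hu.1.symm⟩
  have hcsds : IsCSDS G (↑S : Set V) := by
    refine ⟨hdom, fun u hu => ?_⟩
    have huS : u ∈ S := by simpa using hu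
    have h1 := hSout u huS
    have hne : (G.neighborFinset u ∩ Sᶜ).Nonempty := by
      rw [← Finset.card_pos]; unfold dIn at h1; omega
    obtain ⟨v, hv⟩ := hne
    rw [Finset.mem_inter, SimpleGraph.mem_neighborFinset, Finset.mem_compl] at hv
    refine ⟨v, by simpa using hv.2, hv.1, ?_⟩
    intro w hw
    simp only [Set.mem_union, Set.mem_diff, Set.mem_singleton_iff, Finset.mem_coe,
      not_or, not_and, not_not] at hw
    obtain ⟨hw1, hw2⟩ := hw
    by_cases hwu : w = u
    · subst hwu
      exact ⟨v, Or.inr rfl, hv.1.symm⟩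
    · have hwS : w ∉ S := fun hwS => hwu (hw1 hwS)
      have h2 := hTout w hwS
      have h3 : 1 ≤ ((G.neighborFinset w ∩ S).erase u).card := by
        have := Finset.pred_card_le_card_erase (s := G.neighborFinset w ∩ S) (a := u)
        unfold dIn at h2
        omega
    -- get an element
      obtain ⟨x, hx⟩ := Finset.card_pos.1 (show 0 < ((G.neighborFinset w ∩ S).erase u).card by omega)
      rw [Finset.mem_erase, Finset.mem_inter, SimpleGraph.mem_neighborFinset] at hx
      exact ⟨x, Or.inl ⟨by simpa using hx.2.2, hx.1⟩, hx.2.1.symm⟩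
  have hsize : ((↑S : Set V).ncard : ℝ) ≤ 2 * (Fintype.card V : ℝ) / 3 := by
    rw [Set.ncard_coe_finset]
    have h0 : (0 : ℝ) ≤ (Fintype.card V : ℝ) := Nat.cast_nonneg _
    have : (2 * S.card : ℝ) ≤ (Fintype.card V : ℝ) := by exact_mod_cast hScard
    linarith
  refine ⟨⟨↑S, hcsds, hsize⟩, ?_⟩
  have hle : gammaCS G ≤ (↑S : Set V).ncard :=
    Nat.sInf_le ⟨↑S, hcsds, rfl⟩
  calc (gammaCS G : ℝ) ≤ ((↑S : Set V).ncard : ℝ) := by exact_mod_cast hle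
    _ ≤ _ := hsize
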